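/- (Proposition 3 of the paper.) Let α, β, γ, δ be real numbers with α·δ − β·γ ≠ 0, let M ∈ Matrix (Fin 3) (Fin 3) ℝ be invertible, and let q₁, q₂ : Fin 3 → ℝ[X] be triples of polynomials, each of whose three components has only unit common divisors (in particular, not all components are zero). Let n := max over i of natDegree (q₂ i), and let a ∈ RatFunc ℝ satisfy, for every i ∈ Fin 3, algebraMap ((M·q₁) i) = a * Polynomial.aeval ψ (q₂ i) in RatFunc ℝ. Then there exists a nonzero real number k such that a = algebraMap (C k * (C γ * X + C δ)^n). -/

import Mathlib

open Polynomial

noncomputable def mobius (α β γ δ : ℝ) : RatFunc ℝ :=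
  (algebraMap (Polynomial ℝ) (RatFunc ℝ) (C α * X + C β)) /
  (algebraMap (Polynomial ℝ) (RatFunc ℝ) (C γ * X + C δ))

noncomputable def Hh (a b c d : ℝ) (p : Polynomial ℝ) (m : ℕ) : Polynomial ℝ :=
  ∑ k ∈ Finset.range (m+1), C (p.coeff k) * (C a * X + C b)^k * (C c * X + C d)^(m-k)

lemma lin_ne_zero {c d : ℝ} (h : ¬(c = 0 ∧ d = 0)) : (C c * X + C d : Polynomial ℝ) ≠ 0 := by
  intro h0
  apply h
  constructor
  · have := congrArg (fun p => Polynomial.coeff p 1) h0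
    simpa using this
  · have := congrArg (fun p => Polynomial.coeff p 0) h0
    simpa using this

lemma det_ne_lin {a b c d : ℝ} (h : a * d - b * c ≠ 0) :
    (C c * X + C d : Polynomial ℝ) ≠ 0 := by
  apply lin_ne_zero
  rintro ⟨rfl, rfl⟩
  simp at h

lemma det_ne_lin' {a b c d : ℝ} (h : a * d - b * c ≠ 0) :
    (C a * X + C b : Polynomial ℝ) ≠ 0 := by
  apply lin_ne_zero
  rintro ⟨rfl, rfl⟩
  simp at h

lemma L1 {a b c d : ℝ} (hcd : (C c * X + C d : Polynomial ℝ) ≠ 0)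
    (p : Polynomial ℝ) (m : ℕ) (hm : p.natDegree ≤ m) :
    algebraMap (Polynomial ℝ) (RatFunc ℝ) (Hh a b c d p m)
      = (algebraMap (Polynomial ℝ) (RatFunc ℝ) (C c * X + C d))^m
        * Polynomial.aeval (mobius a b c d) p := by
  have hu : (algebraMap (Polynomial ℝ) (RatFunc ℝ) (C c * X + C d)) ≠ 0 :=
    RatFunc.algebraMap_ne_zero hcd
  rw [Polynomial.aeval_eq_sum_range' (Nat.lt_succ_of_le hm), Hh, map_sum, Finset.mul_sum]
  apply Finset.sum_congr rfl
  intro k hk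
  have hk' : k ≤ m := Nat.lt_succ_iff.mp (Finset.mem_range.mp hk)
  rw [map_mul, map_mul, map_pow, map_pow, Algebra.smul_def, mobius, div_pow]
  rw [IsScalarTower.algebraMap_apply ℝ (Polynomial ℝ) (RatFunc ℝ), Polynomial.algebraMap_eq]
  have key : (algebraMap (Polynomial ℝ) (RatFunc ℝ) (C c * X + C d))^(m-k)
      = (algebraMap (Polynomial ℝ) (RatFunc ℝ) (C c * X + C d))^m
        / (algebraMap (Polynomial ℝ) (RatFunc ℝ) (C c * X + C d))^k := by
    rw [eq_div_iff (pow_ne_zero k hu), pow_sub_mul_pow _ hk']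
  rw [key]
  ring

lemma L2 {a b c d : ℝ} (p : Polynomial ℝ) (m : ℕ) : (Hh a b c d p m).natDegree ≤ m := by
  apply Polynomial.natDegree_sum_le_of_forall_le
  intro k hk
  have hk' : k ≤ m := Nat.lt_succ_iff.mp (Finset.mem_range.mp hk)
  calc (C (p.coeff k) * (C a * X + C b)^k * (C c * X + C d)^(m-k)).natDegree
      ≤ (C (p.coeff k) * (C a * X + C b)^k).natDegree + ((C c * X + C d)^(m-k)).natDegree :=
        Polynomial.natDegree_mul_le
    _ ≤ ((C (p.coeff k)).natDegree + ((C a * X + C b)^k).natDegree) + ((C c * X + C d)^(m-k)).natDegree := by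
        gcongr; exact Polynomial.natDegree_mul_le
    _ ≤ (0 + k * 1) + (m - k) * 1 := by
        gcongr
        · simp
        · exact Polynomial.natDegree_pow_le_of_le k (Polynomial.natDegree_linear_le)
        · exact Polynomial.natDegree_pow_le_of_le (m-k) (Polynomial.natDegree_linear_le)
    _ ≤ m := by omega

lemma L3a {a b c d : ℝ} (hcd : (C c * X + C d : Polynomial ℝ) ≠ 0) (s t : ℝ) :
    Polynomial.aeval (mobius a b c d) (C s * X + C t)
      = algebraMap (Polynomial ℝ) (RatFunc ℝ) (C s * (C a * X + C b) + C t * (C c * X + C d))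
        / algebraMap (Polynomial ℝ) (RatFunc ℝ) (C c * X + C d) := by
  have hu : (algebraMap (Polynomial ℝ) (RatFunc ℝ) (C c * X + C d)) ≠ 0 :=
    RatFunc.algebraMap_ne_zero hcd
  rw [map_add, map_mul, Polynomial.aeval_X, Polynomial.aeval_C, Polynomial.aeval_C, mobius,
    IsScalarTower.algebraMap_apply ℝ (Polynomial ℝ) (RatFunc ℝ) s,
    IsScalarTower.algebraMap_apply ℝ (Polynomial ℝ) (RatFunc ℝ) t, Polynomial.algebraMap_eq,
    eq_div_iff hu, add_mul, mul_assoc, div_mul_cancel₀ _ hu, ← map_mul, ← map_mul, ← map_add]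

lemma L6 {a b c d : ℝ} (s : ℝ) (m : ℕ) :
    Hh a b c d (C s) m = C s * (C c * X + C d)^m := by
  rw [Hh, Finset.sum_eq_single 0]
  · simp
  · intro k _ hk
    simp [Polynomial.coeff_C, hk]
  · intro hmem
    exact absurd (Finset.mem_range.mpr (Nat.succ_pos m)) hmem

lemma L4 {a b c d : ℝ} (h : a * d - b * c ≠ 0) (p : Polynomial ℝ) (m : ℕ)
    (hm : p.natDegree ≤ m) :
    Hh d (-b) (-c) a (Hh a b c d p m) m = C ((a*d - b*c)^m) * p := by
  have h' : d * a - (-b) * (-c) ≠ 0 := by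
    rw [show d * a - (-b) * (-c) = a*d - b*c by ring]; exact h
  have hu' : (C (-c) * X + C a : Polynomial ℝ) ≠ 0 := det_ne_lin h'
  have huu : (algebraMap (Polynomial ℝ) (RatFunc ℝ) (C (-c) * X + C a)) ≠ 0 :=
    RatFunc.algebraMap_ne_zero hu'
  apply RatFunc.algebraMap_injective ℝ
  rw [L1 hu' _ m (L2 _ _)]
  have hv : algebraMap (Polynomial ℝ) (RatFunc ℝ) (C (-c) * X + C a)
        * Polynomial.aeval (mobius d (-b) (-c) a) (C a * X + C b)
      = algebraMap (Polynomial ℝ) (RatFunc ℝ) (C (a*d - b*c) * X) := by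
    rw [L3a hu' a b, mul_div_cancel₀ _ huu]
    congr 1
    simp only [Polynomial.C_sub, Polynomial.C_mul, Polynomial.C_neg]
    ring
  have hu2 : algebraMap (Polynomial ℝ) (RatFunc ℝ) (C (-c) * X + C a)
        * Polynomial.aeval (mobius d (-b) (-c) a) (C c * X + C d)
      = algebraMap (Polynomial ℝ) (RatFunc ℝ) (C (a*d - b*c)) := by
    rw [L3a hu' c d, mul_div_cancel₀ _ huu]
    congr 1
    simp only [Polynomial.C_sub, Polynomial.C_mul, Polynomial.C_neg]
    ring
  rw [Hh, map_sum, Finset.mul_sum]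
  have hABC : ∀ k ∈ Finset.range (m+1),
      (algebraMap (Polynomial ℝ) (RatFunc ℝ) (C (-c) * X + C a))^m *
        (Polynomial.aeval (mobius d (-b) (-c) a)
          (C (p.coeff k) * (C a * X + C b)^k * (C c * X + C d)^(m-k)))
      = algebraMap (Polynomial ℝ) (RatFunc ℝ) (C ((a*d-b*c)^m) * (C (p.coeff k) * X^k)) := by
    intro k hk
    have hk' : k ≤ m := Nat.lt_succ_iff.mp (Finset.mem_range.mp hk)
    have e1 : (algebraMap (Polynomial ℝ) (RatFunc ℝ) (C (-c) * X + C a))^m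
        = (algebraMap (Polynomial ℝ) (RatFunc ℝ) (C (-c) * X + C a))^k *
          (algebraMap (Polynomial ℝ) (RatFunc ℝ) (C (-c) * X + C a))^(m-k) := by
      rw [← pow_add]; congr 1; omega
    rw [map_mul, map_mul, map_pow, map_pow, Polynomial.aeval_C,
      IsScalarTower.algebraMap_apply ℝ (Polynomial ℝ) (RatFunc ℝ) (p.coeff k),
      Polynomial.algebraMap_eq, e1]
    calc (algebraMap (Polynomial ℝ) (RatFunc ℝ) (C (-c) * X + C a))^k *
          (algebraMap (Polynomial ℝ) (RatFunc ℝ) (C (-c) * X + C a))^(m-k) *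
          (algebraMap (Polynomial ℝ) (RatFunc ℝ) (C (p.coeff k)) *
            (Polynomial.aeval (mobius d (-b) (-c) a) (C a * X + C b))^k *
            (Polynomial.aeval (mobius d (-b) (-c) a) (C c * X + C d))^(m-k))
        = algebraMap (Polynomial ℝ) (RatFunc ℝ) (C (p.coeff k)) *
            (algebraMap (Polynomial ℝ) (RatFunc ℝ) (C (-c) * X + C a)
              * Polynomial.aeval (mobius d (-b) (-c) a) (C a * X + C b))^k *
            (algebraMap (Polynomial ℝ) (RatFunc ℝ) (C (-c) * X + C a)
              * Polynomial.aeval (mobius d (-b) (-c) a) (C c * X + C d))^(m-k) := by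
          rw [mul_pow, mul_pow]; ring
      _ = algebraMap (Polynomial ℝ) (RatFunc ℝ) (C (p.coeff k)) *
            (algebraMap (Polynomial ℝ) (RatFunc ℝ) (C (a*d-b*c) * X))^k *
            (algebraMap (Polynomial ℝ) (RatFunc ℝ) (C (a*d-b*c)))^(m-k) := by
          rw [hv, hu2]
      _ = algebraMap (Polynomial ℝ) (RatFunc ℝ) (C ((a*d-b*c)^m) * (C (p.coeff k) * X^k)) := by
          rw [← map_pow, ← map_pow, ← map_mul, ← map_mul]
          congr 1
          have e2 : (C (a*d-b*c) : Polynomial ℝ)^k * (C (a*d-b*c))^(m-k)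
              = C ((a*d-b*c)^m) := by
            rw [← pow_add, Polynomial.C_pow]
            congr 1
            omega
          rw [mul_pow,
            show (C (p.coeff k) : Polynomial ℝ) * (C (a*d-b*c)^k * X^k) * C (a*d-b*c)^(m-k)
              = (C (a*d-b*c)^k * C (a*d-b*c)^(m-k)) * (C (p.coeff k) * X^k) from by ring,
            e2]
  rw [Finset.sum_congr rfl hABC, ← map_sum]
  congr 1
  conv_rhs => rw [p.as_sum_range' (m+1) (Nat.lt_succ_of_le hm), Finset.mul_sum]
  apply Finset.sum_congr rfl
  intro k _
  rw [Polynomial.C_mul_X_pow_eq_monomial]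

lemma L5 {a b c d : ℝ} (hcd : (C c * X + C d : Polynomial ℝ) ≠ 0)
    {x y : Polynomial ℝ} (hx : x ≠ 0) (hy : y ≠ 0) {m : ℕ}
    (hm : x.natDegree + y.natDegree ≤ m) :
    Hh a b c d (x*y) m = Hh a b c d x x.natDegree * Hh a b c d y (m - x.natDegree) := by
  apply RatFunc.algebraMap_injective ℝ
  rw [map_mul, L1 hcd _ m (by rw [Polynomial.natDegree_mul hx hy]; exact hm),
    L1 hcd x x.natDegree le_rfl, L1 hcd y _ (by omega), map_mul]
  have e : (algebraMap (Polynomial ℝ) (RatFunc ℝ) (C c * X + C d))^m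
      = (algebraMap (Polynomial ℝ) (RatFunc ℝ) (C c * X + C d))^(x.natDegree) *
        (algebraMap (Polynomial ℝ) (RatFunc ℝ) (C c * X + C d))^(m - x.natDegree) := by
    rw [← pow_add]
    congr 1
    omega
  rw [e]
  ring

lemma EV {a b c d : ℝ} (hc : c ≠ 0) (hdet : a * d - b * c ≠ 0) {p : Polynomial ℝ}
    (hp : p ≠ 0) :
    ¬ ((C c * X + C d : Polynomial ℝ) ∣ Hh a b c d p p.natDegree) := by
  intro hdvd
  have hu0 : (C c * X + C d : Polynomial ℝ).eval (-d/c) = 0 := by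
    simp only [Polynomial.eval_add, Polynomial.eval_mul, Polynomial.eval_C, Polynomial.eval_X]
    field_simp
    ring
  have h0 : (Hh a b c d p p.natDegree).eval (-d/c) = 0 := by
    obtain ⟨w, hw⟩ := hdvd
    rw [hw, Polynomial.eval_mul, hu0, zero_mul]
  rw [Hh, Polynomial.eval_finset_sum, Finset.sum_eq_single p.natDegree] at h0
  · simp only [Polynomial.eval_mul, Polynomial.eval_pow, Polynomial.eval_C, Nat.sub_self,
      pow_zero, mul_one] at h0
    have hv0 : (C a * X + C b : Polynomial ℝ).eval (-d/c) ≠ 0 := by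
      simp only [Polynomial.eval_add, Polynomial.eval_mul, Polynomial.eval_C, Polynomial.eval_X]
      intro hh
      apply hdet
      field_simp at hh
      linarith
    exact (mul_ne_zero (Polynomial.leadingCoeff_ne_zero.mpr hp)
      (pow_ne_zero _ hv0)) h0
  · intro k hk hkne
    have hk' : k < p.natDegree := by
      have := Finset.mem_range.mp hk
      omega
    simp only [Polynomial.eval_mul, Polynomial.eval_pow, hu0]
    rw [zero_pow (by omega : p.natDegree - k ≠ 0), mul_zero]
  · intro hmem
    exact absurd (Finset.mem_range.mpr (Nat.lt_succ_self _)) hmem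

theorem stmt_6 (α β γ δ : ℝ) (h : α * δ - β * γ ≠ 0)
    (M : Matrix (Fin 3) (Fin 3) ℝ) (hM : IsUnit M)
    (q₁ q₂ : Fin 3 → Polynomial ℝ)
    (hc1 : ∀ d : Polynomial ℝ, (∀ i, d ∣ q₁ i) → IsUnit d)
    (hc2 : ∀ d : Polynomial ℝ, (∀ i, d ∣ q₂ i) → IsUnit d)
    (a : RatFunc ℝ)
    (heq : ∀ i, algebraMap (Polynomial ℝ) (RatFunc ℝ) (∑ j, M i j • q₁ j)
      = a * Polynomial.aeval (mobius α β γ δ) (q₂ i)) :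
    ∃ k : ℝ, k ≠ 0 ∧ a = algebraMap (Polynomial ℝ) (RatFunc ℝ)
      (C k * (C γ * X + C δ) ^ (Finset.univ.sup fun i => (q₂ i).natDegree)) := by
  classical
  set n := Finset.univ.sup fun i => (q₂ i).natDegree with hn
  have hdeg : ∀ i, (q₂ i).natDegree ≤ n := by
    intro i
    rw [hn]
    exact Finset.le_sup (f := fun i => (q₂ i).natDegree) (Finset.mem_univ i)
  have hu0 : (C γ * X + C δ : Polynomial ℝ) ≠ 0 := det_ne_lin h
  have huu : algebraMap (Polynomial ℝ) (RatFunc ℝ) (C γ * X + C δ) ≠ 0 :=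
    RatFunc.algebraMap_ne_zero hu0
  have h2 : δ * α - (-β) * (-γ) ≠ 0 := by
    rw [show δ * α - (-β) * (-γ) = α * δ - β * γ by ring]; exact h
  have hdet : IsUnit M.det := (Matrix.isUnit_iff_isUnit_det M).mp hM
  have hinv : M⁻¹ * M = 1 := Matrix.nonsing_inv_mul M hdet
  have hrec : ∀ j, q₁ j = ∑ i, (M⁻¹) j i • (∑ k, M i k • q₁ k) := by
    intro j
    have e1 : ∀ i, (M⁻¹) j i • (∑ k, M i k • q₁ k) = ∑ k, ((M⁻¹) j i * M i k) • q₁ k := by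
      intro i
      rw [Finset.smul_sum]
      exact Finset.sum_congr rfl fun k _ => (smul_smul _ _ _)
    rw [Finset.sum_congr rfl fun i _ => e1 i, Finset.sum_comm]
    have e2 : ∀ k, (∑ i, ((M⁻¹) j i * M i k) • q₁ k) = ((M⁻¹ * M) j k) • q₁ k := by
      intro k
      rw [← Finset.sum_smul, Matrix.mul_apply]
    rw [Finset.sum_congr rfl fun k _ => e2 k, hinv]
    simp [Matrix.one_apply]
  have hLunit : ∀ e : Polynomial ℝ, (∀ i, e ∣ ∑ j, M i j • q₁ j) → IsUnit e := by
    intro e he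
    apply hc1
    intro j
    rw [hrec j]
    refine Finset.dvd_sum fun i _ => ?_
    rw [Polynomial.smul_eq_C_mul]
    exact Dvd.dvd.mul_left (he i) _
  have ha : a ≠ 0 := by
    intro h0
    have hL0 : ∀ i, (∑ j, M i j • q₁ j) = 0 := by
      intro i
      have hi := heq i
      rw [h0, zero_mul] at hi
      exact (map_eq_zero_iff _ (RatFunc.algebraMap_injective ℝ)).mp hi
    have hq10 : ∀ j, q₁ j = 0 := by
      intro j
      rw [hrec j]
      simp [hL0]
    exact Polynomial.not_isUnit_X (hc1 X fun j => by rw [hq10 j]; exact dvd_zero _)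
  have hfg : a * algebraMap (Polynomial ℝ) (RatFunc ℝ) a.denom
      = algebraMap (Polynomial ℝ) (RatFunc ℝ) a.num := by
    exact ((div_eq_iff (RatFunc.algebraMap_ne_zero (RatFunc.denom_ne_zero a))).mp
      (RatFunc.num_div_denom a)).symm
  have hpoly : ∀ i, (∑ j, M i j • q₁ j) * (C γ * X + C δ)^n * a.denom
      = a.num * Hh α β γ δ (q₂ i) n := by
    intro i
    apply RatFunc.algebraMap_injective ℝ
    calc algebraMap (Polynomial ℝ) (RatFunc ℝ)
          ((∑ j, M i j • q₁ j) * (C γ * X + C δ)^n * a.denom)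
        = (a * algebraMap (Polynomial ℝ) (RatFunc ℝ) a.denom) *
            ((algebraMap (Polynomial ℝ) (RatFunc ℝ) (C γ * X + C δ))^n *
              Polynomial.aeval (mobius α β γ δ) (q₂ i)) := by
          rw [map_mul, map_mul, map_pow, heq i]; ring
      _ = algebraMap (Polynomial ℝ) (RatFunc ℝ) a.num *
            algebraMap (Polynomial ℝ) (RatFunc ℝ) (Hh α β γ δ (q₂ i) n) := by
          rw [hfg, L1 hu0 (q₂ i) n (hdeg i)]
      _ = algebraMap (Polynomial ℝ) (RatFunc ℝ) (a.num * Hh α β γ δ (q₂ i) n) :=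
          (map_mul _ _ _).symm
  have hq2ne : ∃ i, q₂ i ≠ 0 := by
    by_contra hall
    push_neg at hall
    exact Polynomial.not_isUnit_X (hc2 X fun i => by rw [hall i]; exact dvd_zero _)
  have hCun : ∀ m : ℕ, IsUnit (C ((α*δ-β*γ)^m) : Polynomial ℝ) := fun m =>
    Polynomial.isUnit_C.mpr (pow_ne_zero m h).isUnit
  have hHz : Hh δ (-β) (-γ) α 0 n = 0 := by simp [Hh]
  have hPne : ∃ i, Hh α β γ δ (q₂ i) n ≠ 0 := by
    obtain ⟨i, hi⟩ := hq2ne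
    refine ⟨i, fun h0 => hi ?_⟩
    have h4 := L4 h (q₂ i) n (hdeg i)
    rw [h0, hHz] at h4
    rcases mul_eq_zero.mp h4.symm with hcz | hq
    · exact absurd hcz (hCun n).ne_zero
    · exact hq
  have CLU : ∀ e : Polynomial ℝ, (∀ i, e ∣ Hh α β γ δ (q₂ i) n) → IsUnit e := by
    intro e he
    have hene : e ≠ 0 := by
      obtain ⟨i, hi⟩ := hPne
      intro h0
      rw [h0] at he
      exact hi (zero_dvd_iff.mp (he i))
    have hkey2 : ∀ i, Hh δ (-β) (-γ) α e e.natDegree ∣ q₂ i := by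
      intro i
      by_cases hPi : Hh α β γ δ (q₂ i) n = 0
      · have h4 := L4 h (q₂ i) n (hdeg i)
        rw [hPi, hHz] at h4
        rcases mul_eq_zero.mp h4.symm with hcz | hq
        · exact absurd hcz (hCun n).ne_zero
        · rw [hq]; exact dvd_zero _
      · obtain ⟨w, hw⟩ := he i
        have hwne : w ≠ 0 := fun h0 => hPi (by rw [hw, h0, mul_zero])
        have hdegs : e.natDegree + w.natDegree ≤ n := by
          rw [← Polynomial.natDegree_mul hene hwne, ← hw]
          exact L2 (q₂ i) n
        have h5 := L5 (a:=δ) (b:=-β) (det_ne_lin h2) hene hwne hdegs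
        have h4 := L4 h (q₂ i) n (hdeg i)
        rw [hw, h5] at h4
        have hdv : Hh δ (-β) (-γ) α e e.natDegree ∣ C ((α*δ-β*γ)^n) * q₂ i :=
          ⟨_, h4.symm⟩
        exact ((hCun n).dvd_mul_left).mp hdv
    have hunit' : IsUnit (Hh δ (-β) (-γ) α e e.natDegree) := hc2 _ hkey2
    obtain ⟨r, hr, hre⟩ := Polynomial.isUnit_iff.mp hunit'
    have h4' := L4 h2 e e.natDegree le_rfl
    rw [neg_neg, neg_neg, ← hre, L6] at h4'
    have hD' : IsUnit (C ((δ*α - -β * -γ)^e.natDegree) : Polynomial ℝ) :=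
      Polynomial.isUnit_C.mpr (pow_ne_zero _ h2).isUnit
    by_cases hγ : γ = 0
    · have hδ : δ ≠ 0 := by
        intro h0; rw [hγ, h0] at h; simp at h
      have huunit : IsUnit (C γ * X + C δ : Polynomial ℝ) := by
        rw [hγ]
        simpa using Polynomial.isUnit_C.mpr hδ.isUnit
      have : IsUnit (C ((δ*α - -β * -γ)^e.natDegree) * e : Polynomial ℝ) := by
        rw [← h4']
        exact (Polynomial.isUnit_C.mpr hr).mul (huunit.pow _)
      exact isUnit_of_mul_isUnit_right this
    · obtain ⟨i₀, -, hi₀⟩ :=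
        Finset.exists_mem_eq_sup Finset.univ ⟨0, Finset.mem_univ 0⟩
          (fun i => (q₂ i).natDegree)
      rw [← hn] at hi₀
      by_cases hn0 : n = 0
      · apply hc2
        intro i
        have hq2c : q₂ i = C ((q₂ i).coeff 0) :=
          Polynomial.eq_C_of_natDegree_le_zero (hn0 ▸ hdeg i)
        have hPq : Hh α β γ δ (q₂ i) n = q₂ i := by
          rw [hn0, Hh]
          simp only [zero_add, Finset.sum_range_one, pow_zero, Nat.sub_self, mul_one, one_mul]
          exact hq2c.symm
        rw [← hPq]
        exact he i
      · have hq₂i₀ : q₂ i₀ ≠ 0 := by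
          intro h0
          rw [h0, Polynomial.natDegree_zero] at hi₀
          exact hn0 hi₀
        have hEV := EV hγ h hq₂i₀
        rw [← hi₀] at hEV
        have hnd0 : e.natDegree = 0 := by
          by_contra hnd
          apply hEV
          have hue : (C γ * X + C δ : Polynomial ℝ) ∣
              C ((δ*α - -β * -γ)^e.natDegree) * e := by
            rw [← h4']
            exact Dvd.dvd.mul_left (dvd_pow_self _ hnd) _
          exact ((hD'.dvd_mul_left).mp hue).trans (he i₀)
        have : IsUnit (C ((δ*α - -β * -γ)^e.natDegree) * e : Polynomial ℝ) := by
          rw [← h4', hnd0, pow_zero, mul_one]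
          exact Polynomial.isUnit_C.mpr hr
        exact isUnit_of_mul_isUnit_right this
  have hg1 : a.denom = 1 := by
    apply (RatFunc.monic_denom a).eq_one_of_isUnit
    apply CLU
    intro i
    have hdv : a.denom ∣ a.num * Hh α β γ δ (q₂ i) n :=
      ⟨(∑ j, M i j • q₁ j) * (C γ * X + C δ)^n, by rw [← hpoly i]; ring⟩
    exact (RatFunc.isCoprime_num_denom a).symm.dvd_of_dvd_mul_left hdv
  have hpoly2 : ∀ i, (∑ j, M i j • q₁ j) * (C γ * X + C δ)^n
      = a.num * Hh α β γ δ (q₂ i) n := by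
    intro i
    have hp := hpoly i
    rwa [hg1, mul_one] at hp
  have hf : a.num ≠ 0 := RatFunc.num_ne_zero ha
  have hanum : a = algebraMap (Polynomial ℝ) (RatFunc ℝ) a.num := by
    conv_lhs => rw [← RatFunc.num_div_denom a]
    rw [hg1, map_one, div_one]
  by_cases hγ : γ = 0
  · -- u is a unit
    subst hγ
    have hδ : δ ≠ 0 := by intro h0; rw [h0] at h; simp at h
    have hCδ : ((C 0 : Polynomial ℝ) * X + C δ) = C δ := by simp
    have hun : IsUnit ((C (0:ℝ) * X + C δ : Polynomial ℝ)^n) := by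
      rw [hCδ]
      exact (Polynomial.isUnit_C.mpr hδ.isUnit).pow n
    have hnum_dvd : ∀ i, a.num ∣ (∑ j, M i j • q₁ j) := by
      intro i
      have hdvd : a.num ∣ ((C (0:ℝ) * X + C δ : Polynomial ℝ))^n * (∑ j, M i j • q₁ j) :=
        ⟨Hh α β 0 δ (q₂ i) n, by rw [← hpoly2 i]; ring⟩
      exact (hun.dvd_mul_left).mp hdvd
    obtain ⟨k, hk, hkC⟩ := Polynomial.isUnit_iff.mp (hLunit a.num hnum_dvd)
    refine ⟨k / δ^n, div_ne_zero hk.ne_zero (pow_ne_zero n hδ), ?_⟩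
    rw [hanum]
    congr 1
    rw [← hkC, hCδ, ← Polynomial.C_pow, ← Polynomial.C_mul,
      div_mul_cancel₀ _ (pow_ne_zero n hδ)]
  · have hprime : Prime (C γ * X + C δ : Polynomial ℝ) := by
      have h1 : (C γ * X + C δ : Polynomial ℝ) = (X - C (-δ/γ)) * C γ := by
        have e0 : (-δ/γ) * γ = -δ := by field_simp
        rw [sub_mul, ← Polynomial.C_mul, e0, Polynomial.C_neg, sub_neg_eq_add]
        ring
      rw [h1]
      exact (associated_mul_unit_right (X - C (-δ/γ)) (C γ)
        (Polynomial.isUnit_C.mpr (Ne.isUnit hγ))).prime (Polynomial.prime_X_sub_C _)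
    obtain ⟨s, hnum, hnd⟩ :=
      (FiniteMultiplicity.of_prime_left hprime hf).exists_eq_pow_mul_and_not_dvd
    set m := multiplicity (C γ * X + C δ : Polynomial ℝ) a.num with hm
    have hcop : IsCoprime ((C γ * X + C δ : Polynomial ℝ)^n) s :=
      IsCoprime.pow_left (hprime.coprime_iff_not_dvd.mpr hnd)
    have hsL : ∀ i, s ∣ (∑ j, M i j • q₁ j) := by
      intro i
      have hdvd : s ∣ ((C γ * X + C δ : Polynomial ℝ))^n * (∑ j, M i j • q₁ j) := by
        have hd1 : s ∣ a.num := ⟨(C γ * X + C δ : Polynomial ℝ)^m, by rw [hnum]; ring⟩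
        have hd2 : a.num ∣ (C γ * X + C δ : Polynomial ℝ)^n * (∑ j, M i j • q₁ j) :=
          ⟨Hh α β γ δ (q₂ i) n, by rw [← hpoly2 i]; ring⟩
        exact hd1.trans hd2
      exact hcop.symm.dvd_of_dvd_mul_left hdvd
    obtain ⟨k, hk, hkC⟩ := Polynomial.isUnit_iff.mp (hLunit s hsL)
    have hmn : m ≤ n := by
      by_contra hmn
      push_neg at hmn
      have hudvd : ∀ i, (C γ * X + C δ : Polynomial ℝ) ∣ (∑ j, M i j • q₁ j) := by
        intro i
        have hcan : (∑ j, M i j • q₁ j)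
            = (C γ * X + C δ : Polynomial ℝ)^(m-n) * (s * Hh α β γ δ (q₂ i) n) := by
          apply mul_right_cancel₀ (pow_ne_zero n hu0)
          rw [hpoly2 i, hnum]
          rw [show ((C γ * X + C δ : Polynomial ℝ))^(m-n) * (s * Hh α β γ δ (q₂ i) n) *
              (C γ * X + C δ)^n
              = ((C γ * X + C δ))^(m-n) * (C γ * X + C δ)^n * s * Hh α β γ δ (q₂ i) n
              from by ring, ← pow_add, show m - n + n = m from by omega]
        rw [hcan]
        exact Dvd.dvd.mul_right (dvd_pow_self _ (by omega)) _
      exact hprime.not_unit (hLunit _ hudvd)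
    have hcancel : ∀ i, (∑ j, M i j • q₁ j) * (C γ * X + C δ)^(n-m)
        = s * Hh α β γ δ (q₂ i) n := by
      intro i
      apply mul_left_cancel₀ (pow_ne_zero m hu0)
      rw [show (C γ * X + C δ : Polynomial ℝ)^m *
          ((∑ j, M i j • q₁ j) * (C γ * X + C δ)^(n-m))
          = (∑ j, M i j • q₁ j) * ((C γ * X + C δ)^m * (C γ * X + C δ)^(n-m)) from by ring,
        ← pow_add, show m + (n-m) = n from by omega, hpoly2 i, hnum]
      ring
    have hdvnm : ∀ i, ((C γ * X + C δ : Polynomial ℝ))^(n-m) ∣ Hh α β γ δ (q₂ i) n := by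
      intro i
      have hd1 : ((C γ * X + C δ : Polynomial ℝ))^(n-m) ∣ s * Hh α β γ δ (q₂ i) n :=
        ⟨∑ j, M i j • q₁ j, by rw [← hcancel i]; ring⟩
      exact ((Polynomial.isUnit_iff.mpr ⟨k, hk, hkC⟩).dvd_mul_left).mp hd1
    have hnm : n = m := by
      rcases Nat.eq_or_lt_of_le hmn with he | hlt
      · exact he.symm
      · exact absurd (isUnit_of_dvd_unit (dvd_pow_self _ (by omega : n - m ≠ 0))
          (CLU _ hdvnm)) hprime.not_unit
    refine ⟨k, hk.ne_zero, ?_⟩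
    rw [hanum]
    congr 1
    rw [hnum, ← hkC, hnm]
    ring
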